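/- Let B₁, B₂ be Banach spaces and A : B₁ → B₂ a continuous Fredholm operator of index zero with n-dimensional kernel spanned by x₁⁰,…,xₙ⁰ and n-dimensional cokernel, with ker A* spanned by x₁⁰*,…,xₙ⁰* ∈ B₂*. Let h₁*,…,hₙ* ∈ B₁* and h₁,…,hₙ ∈ B₂ satisfy det[hᵢ*(xⱼ⁰)] ≠ 0 and det[xᵢ⁰*(hⱼ)] ≠ 0. Then the perturbed operator A − A₁, where A₁x = ∑ᵢ hᵢ·hᵢ*(x), is a continuous bijection of B₁ onto B₂ (hence continuously invertible). -/

import Mathlib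

open Submodule

noncomputable section

/-- Finite-dimensional perturbation theorem (invertibility part): if `A : B₁ → B₂` is a
continuous Fredholm operator of index zero with `n`-dimensional kernel spanned by the `x⁰ⱼ`
and cokernel described by the functionals `x⁰ᵢ*` spanning `ker A*`, and if
`det[hᵢ*(x⁰ⱼ)] ≠ 0` and `det[x⁰ᵢ*(hⱼ)] ≠ 0`, then the perturbed operator
`x ↦ Ax − ∑ᵢ hᵢ*(x) hᵢ` is a continuous bijection of `B₁` onto `B₂`, with continuous inverse. -/
theorem finite_dim_perturbation_invertible
    {B₁ B₂ : Type*}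
    [NormedAddCommGroup B₁] [NormedSpace ℝ B₁] [CompleteSpace B₁]
    [NormedAddCommGroup B₂] [NormedSpace ℝ B₂] [CompleteSpace B₂]
    (A : B₁ →L[ℝ] B₂) (n : ℕ)
    (x0 : Fin n → B₁) (xs : Fin n → (B₂ →L[ℝ] ℝ))
    (hx0li : LinearIndependent ℝ x0)
    (hker : LinearMap.ker (A : B₁ →ₗ[ℝ] B₂) = Submodule.span ℝ (Set.range x0))
    (hxsli : LinearIndependent ℝ xs)
    (hxsker : ∀ i, (xs i).comp A = 0)
    (hxsspan : ∀ f : B₂ →L[ℝ] ℝ, f.comp A = 0 → f ∈ Submodule.span ℝ (Set.range xs))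
    (hclosed : IsClosed ((LinearMap.range (A : B₁ →ₗ[ℝ] B₂)) : Set B₂))
    (hrange : LinearMap.range (A : B₁ →ₗ[ℝ] B₂) = ⨅ i : Fin n, LinearMap.ker (xs i : B₂ →ₗ[ℝ] ℝ))
    (hs : Fin n → (B₁ →L[ℝ] ℝ)) (h : Fin n → B₂)
    (hdet1 : Matrix.det (Matrix.of fun i j => (hs i) (x0 j)) ≠ 0)
    (hdet2 : Matrix.det (Matrix.of fun i j => (xs i) (h j)) ≠ 0) :
    Function.Bijective (fun x => A x - ∑ i, (hs i) x • h i)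
      ∧ Continuous (fun x => A x - ∑ i, (hs i) x • h i)
      ∧ ∃ Binv : B₂ →L[ℝ] B₁,
          (∀ x : B₁, Binv (A x - ∑ i, (hs i) x • h i) = x)
          ∧ (∀ y : B₂, A (Binv y) - ∑ i, (hs i) (Binv y) • h i = y) := by
  classical
  set T : B₁ →L[ℝ] B₂ := A - ∑ i, (hs i).smulRight (h i) with hT
  have hTapp : ∀ x, T x = A x - ∑ i, (hs i) x • h i := by
    intro x
    simp [hT, ContinuousLinearMap.sub_apply, ContinuousLinearMap.sum_apply]
  set M1 : Matrix (Fin n) (Fin n) ℝ := Matrix.of fun i j => (hs i) (x0 j) with hM1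
  set M2 : Matrix (Fin n) (Fin n) ℝ := Matrix.of fun i j => (xs i) (h j) with hM2
  have hM1u : IsUnit M1.det := isUnit_iff_ne_zero.mpr hdet1
  have hM2u : IsUnit M2.det := isUnit_iff_ne_zero.mpr hdet2
  have mulVec_zero1 : ∀ v : Fin n → ℝ, M1.mulVec v = 0 → v = 0 := by
    intro v hv
    have h2 := congrArg (M1⁻¹.mulVec ·) hv
    simpa [Matrix.mulVec_mulVec, Matrix.nonsing_inv_mul M1 hM1u] using h2
  have mulVec_zero2 : ∀ v : Fin n → ℝ, M2.mulVec v = 0 → v = 0 := by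
    intro v hv
    have h2 := congrArg (M2⁻¹.mulVec ·) hv
    simpa [Matrix.mulVec_mulVec, Matrix.nonsing_inv_mul M2 hM2u] using h2
  have hxsA : ∀ i x, (xs i) (A x) = 0 := by
    intro i x
    have := ContinuousLinearMap.ext_iff.mp (hxsker i) x
    simpa using this
  -- injectivity
  have hinj : LinearMap.ker (T : B₁ →ₗ[ℝ] B₂) = ⊥ := by
    rw [LinearMap.ker_eq_bot']
    intro x hx
    have hx0 : A x - ∑ i, (hs i) x • h i = 0 := (hTapp x).symm.trans hx
    have hAx : A x = ∑ i, (hs i) x • h i := sub_eq_zero.mp hx0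
    -- apply xs j to get M2ᵀ relation
    have hv : M2.mulVec (fun i => (hs i) x) = 0 := by
      funext j
      have := hxsA j x
      rw [hAx] at this
      simpa [Matrix.mulVec, dotProduct, hM2, mul_comm] using this
    have hhs0 : ∀ i, (hs i) x = 0 := fun i => congrFun (mulVec_zero2 _ hv) i
    have hAx0 : A x = 0 := by simp [hAx, hhs0]
    have hxmem : x ∈ Submodule.span ℝ (Set.range x0) := by
      rw [← hker]; exact hAx0
    obtain ⟨c, hc⟩ := mem_span_range_iff_exists_fun ℝ |>.mp hxmem
    have hvc : M1.mulVec c = 0 := by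
      funext i
      have : (hs i) x = 0 := hhs0 i
      rw [← hc] at this
      simpa [Matrix.mulVec, dotProduct, hM1, mul_comm, map_sum] using this
    have hc0 : c = 0 := mulVec_zero1 _ hvc
    rw [← hc, hc0]
    simp
  -- surjectivity
  have hsurj : LinearMap.range (T : B₁ →ₗ[ℝ] B₂) = ⊤ := by
    rw [LinearMap.range_eq_top]
    intro y
    -- solve M2 c = (xs i y)
    set c : Fin n → ℝ := M2⁻¹.mulVec (fun i => (xs i) y) with hc
    have hMc : M2.mulVec c = fun i => (xs i) y := by
      rw [hc, Matrix.mulVec_mulVec, Matrix.mul_nonsing_inv M2 hM2u, Matrix.one_mulVec]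
    have hymem : y - ∑ j, c j • h j ∈ LinearMap.range (A : B₁ →ₗ[ℝ] B₂) := by
      rw [hrange, Submodule.mem_iInf]
      intro i
      have := congrFun hMc i
      simp only [LinearMap.mem_ker, ContinuousLinearMap.coe_coe]
      rw [map_sub, map_sum]
      simp only [map_smul]
      rw [sub_eq_zero, ← this]
      simp [Matrix.mulVec, dotProduct, hM2, mul_comm, smul_eq_mul]
    obtain ⟨u, hu⟩ := hymem
    -- solve M1 d = -c - hs u
    set d : Fin n → ℝ := M1⁻¹.mulVec (fun i => -(c i) - (hs i) u) with hd
    have hMd : M1.mulVec d = fun i => -(c i) - (hs i) u := by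
      rw [hd, Matrix.mulVec_mulVec, Matrix.mul_nonsing_inv M1 hM1u, Matrix.one_mulVec]
    refine ⟨u + ∑ j, d j • x0 j, ?_⟩
    have hx0ker : ∀ j, A (x0 j) = 0 := by
      intro j
      have : x0 j ∈ LinearMap.ker (A : B₁ →ₗ[ℝ] B₂) := by
        rw [hker]
        exact Submodule.subset_span ⟨j, rfl⟩
      exact this
    have hAx : A (u + ∑ j, d j • x0 j) = A u := by
      rw [map_add, map_sum]
      simp [hx0ker]
    have hhsx : ∀ i, (hs i) (u + ∑ j, d j • x0 j) = -(c i) := by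
      intro i
      have hMdi := congrFun hMd i
      have : M1.mulVec d i = ∑ j, d j • (hs i) (x0 j) := by
        simp [Matrix.mulVec, dotProduct, hM1, mul_comm, smul_eq_mul]
      rw [this] at hMdi
      rw [map_add, map_sum]
      simp only [map_smul, smul_eq_mul] at hMdi ⊢
      linarith
    rw [ContinuousLinearMap.coe_coe] at hu ⊢
    rw [hTapp, hAx, hu]
    have : ∑ i, (hs i) (u + ∑ j, d j • x0 j) • h i = -∑ j, c j • h j := by
      rw [← Finset.sum_neg_distrib]
      exact Finset.sum_congr rfl fun i _ => by rw [hhsx i, neg_smul]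
    rw [this]
    abel
  -- assemble
  set e : B₁ ≃L[ℝ] B₂ := ContinuousLinearEquiv.ofBijective T hinj hsurj with he
  have heq : (fun x => A x - ∑ i, (hs i) x • h i) = fun x => T x := by
    funext x; exact (hTapp x).symm
  refine ⟨?_, ?_, ⟨(e.symm : B₂ →L[ℝ] B₁), ?_, ?_⟩⟩
  · rw [heq]
    exact ⟨LinearMap.ker_eq_bot.mp hinj, LinearMap.range_eq_top.mp hsurj⟩
  · rw [heq]; exact T.continuous
  · intro x
    rw [← hTapp]
    exact e.symm_apply_apply x
  · intro y
    rw [← hTapp]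
    exact e.apply_symm_apply y
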